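/- Let α = u + iv with u, v ∈ ℝ, and let t ∈ (0, 2π). Then the modulus of β_α(t) = e^{it}(1 − e^{−it})^α equals (2 sin(t/2))^u · e^{v(t−π)/2}. -/

import Mathlib

open Real Complex

/-- The boundary curve `β_α(t) = e^{it} (1 - e^{-it})^α` (principal branch). -/
noncomputable def betaCurve (α : ℂ) (t : ℝ) : ℂ :=
  Complex.exp (Complex.I * t) * (1 - Complex.exp (-(Complex.I * t))) ^ α

lemma key_eq (t : ℝ) :
    (1 : ℂ) - Complex.exp (-(Complex.I * t))
      = (↑(2 * Real.sin (t / 2)) : ℂ) *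
        (Complex.cos ↑((Real.pi - t) / 2) + Complex.sin ↑((Real.pi - t) / 2) * Complex.I) := by
  have h1 : -(Complex.I * (t : ℂ)) = ((-t : ℝ) : ℂ) * Complex.I := by push_cast; ring
  rw [h1, Complex.exp_mul_I]
  have hc : Real.cos ((Real.pi - t) / 2) = Real.sin (t / 2) := by
    rw [show (Real.pi - t) / 2 = Real.pi / 2 - t / 2 by ring, Real.cos_pi_div_two_sub]
  have hs : Real.sin ((Real.pi - t) / 2) = Real.cos (t / 2) := by
    rw [show (Real.pi - t) / 2 = Real.pi / 2 - t / 2 by ring, Real.sin_pi_div_two_sub]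
  have hcos : Real.cos (-t) = 1 - 2 * Real.sin (t / 2) ^ 2 := by
    have h2 := Real.cos_two_mul (t / 2)
    rw [show 2 * (t / 2) = t by ring] at h2
    have h3 := Real.sin_sq_add_cos_sq (t / 2)
    rw [Real.cos_neg]
    nlinarith
  have hsin : Real.sin (-t) = -(2 * Real.sin (t / 2) * Real.cos (t / 2)) := by
    have h2 := Real.sin_two_mul (t / 2)
    rw [show 2 * (t / 2) = t by ring] at h2
    rw [Real.sin_neg, h2]
  rw [show Complex.cos (↑(-t : ℝ)) = ↑(Real.cos (-t)) from (Complex.ofReal_cos _).symm,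
    show Complex.sin (↑(-t : ℝ)) = ↑(Real.sin (-t)) from (Complex.ofReal_sin _).symm,
    show Complex.cos (↑((Real.pi - t) / 2)) = ↑(Real.cos ((Real.pi - t) / 2)) from
      (Complex.ofReal_cos _).symm,
    show Complex.sin (↑((Real.pi - t) / 2)) = ↑(Real.sin ((Real.pi - t) / 2)) from
      (Complex.ofReal_sin _).symm,
    hc, hs, hcos, hsin]
  push_cast
  ring

/-- For `α = u + iv` and `t ∈ (0, 2π)`, the modulus of `β_α(t)` is
`(2 sin(t/2))^u e^{v(t-π)/2}`. -/
theorem abs_betaCurve (u v t : ℝ) (ht : t ∈ Set.Ioo 0 (2 * Real.pi)) :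
    ‖betaCurve (u + v * Complex.I) t‖
      = (2 * Real.sin (t / 2)) ^ u * Real.exp (v * (t - Real.pi) / 2) := by
  obtain ⟨ht0, ht2⟩ := ht
  have hsin : 0 < Real.sin (t / 2) := by
    apply Real.sin_pos_of_pos_of_lt_pi <;> linarith
  have hr : 0 < 2 * Real.sin (t / 2) := by linarith
  have hθ : (Real.pi - t) / 2 ∈ Set.Ioc (-Real.pi) Real.pi := by
    constructor <;> [skip; skip] <;> nlinarith [Real.pi_pos]
  set z : ℂ := 1 - Complex.exp (-(Complex.I * t)) with hz
  have habs : ‖z‖ = 2 * Real.sin (t / 2) := by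
    rw [hz, key_eq, norm_mul, Complex.norm_cos_add_sin_mul_I, Complex.norm_real, Real.norm_eq_abs,
      abs_of_pos hr, mul_one]
  have harg : Complex.arg z = (Real.pi - t) / 2 := by
    rw [hz, key_eq]
    exact Complex.arg_mul_cos_add_sin_mul_I hr hθ
  have hz0 : z ≠ 0 := by
    intro h
    rw [h] at habs
    simp at habs
    linarith
  rw [betaCurve, norm_mul, Complex.norm_exp,
    Complex.norm_cpow_of_ne_zero hz0, habs, harg]
  have : (Complex.I * ↑t).re = 0 := by simp
  rw [this, Real.exp_zero, one_mul]
  have hre : (↑u + ↑v * Complex.I : ℂ).re = u := by simp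
  have him : (↑u + ↑v * Complex.I : ℂ).im = v := by simp
  rw [hre, him, div_eq_mul_inv, ← Real.exp_neg]
  ring_nf
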